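/- Let χ₅ be the quadratic Dirichlet character modulo 5 (the Legendre symbol: χ₅(n) = 1 if n ≡ ±1 mod 5, χ₅(n) = −1 if n ≡ ±2 mod 5, and χ₅(n) = 0 if 5 ∣ n). Then ∑_{n=1}^{∞} χ₅(n)/n = (2/√5) · log((1 + √5)/2). -/

import Mathlib

open Real Filter intervalIntegral

private lemma s5sq' : Real.sqrt 5 ^ 2 = 5 := Real.sq_sqrt (by norm_num)
private lemma s5lt' : Real.sqrt 5 < 3 := by nlinarith [s5sq', Real.sqrt_nonneg 5]
private lemma s5gt' : 2 < Real.sqrt 5 := by nlinarith [s5sq', Real.sqrt_nonneg 5]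

private noncomputable def gg5 : ℝ → ℝ := fun x => (1 - x^2)/(x^4+x^3+x^2+x+1)
private noncomputable def FF5 : ℝ → ℝ := fun x => (1/Real.sqrt 5) *
  (Real.log (x^2 + (1+Real.sqrt 5)/2 * x + 1) - Real.log (x^2 + (1-Real.sqrt 5)/2 * x + 1))

private lemma q5_pos (x : ℝ) : 0 < x^4+x^3+x^2+x+1 := by
  nlinarith [sq_nonneg (2*x^2+x), sq_nonneg (3*x+2), sq_nonneg x, sq_nonneg (x+1)]

private lemma qa5_pos {x : ℝ} (hx : x ∈ Set.Icc (0:ℝ) 1) :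
    0 < x^2 + (1+Real.sqrt 5)/2 * x + 1 := by
  obtain ⟨h0, h1⟩ := hx; nlinarith [s5gt', s5lt']

private lemma qb5_pos {x : ℝ} (hx : x ∈ Set.Icc (0:ℝ) 1) :
    0 < x^2 + (1-Real.sqrt 5)/2 * x + 1 := by
  obtain ⟨h0, h1⟩ := hx; nlinarith [s5gt', s5lt']

private lemma gg5_deriv {x : ℝ} (hx : x ∈ Set.Icc (0:ℝ) 1) : HasDerivAt FF5 (gg5 x) x := by
  obtain ⟨h0, h1⟩ := hx
  have ha : HasDerivAt (fun x : ℝ => x^2 + (1+Real.sqrt 5)/2 * x + 1)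
      (2*x + (1+Real.sqrt 5)/2) x := by
    simpa using ((hasDerivAt_pow 2 x).add
      ((hasDerivAt_id x).const_mul ((1+Real.sqrt 5)/2))).add_const 1
  have hb : HasDerivAt (fun x : ℝ => x^2 + (1-Real.sqrt 5)/2 * x + 1)
      (2*x + (1-Real.sqrt 5)/2) x := by
    simpa using ((hasDerivAt_pow 2 x).add
      ((hasDerivAt_id x).const_mul ((1-Real.sqrt 5)/2))).add_const 1
  have hApos := qa5_pos (Set.mem_Icc.2 ⟨h0,h1⟩)
  have hBpos := qb5_pos (Set.mem_Icc.2 ⟨h0,h1⟩)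
  have hA := (ha.log (ne_of_gt hApos))
  have hB := (hb.log (ne_of_gt hBpos))
  have key := ((hA.sub hB).const_mul (1/Real.sqrt 5))
  refine HasDerivAt.congr_deriv key ?_
  have h5 : Real.sqrt 5 ≠ 0 := by positivity
  unfold gg5
  have hfac : x^4+x^3+x^2+x+1
      = (x^2 + (1+Real.sqrt 5)/2 * x + 1) * (x^2 + (1-Real.sqrt 5)/2 * x + 1) := by
    nlinarith [s5sq']
  rw [hfac, div_sub_div _ _ (ne_of_gt hApos) (ne_of_gt hBpos)]
  have hnum : (2*x+(1+Real.sqrt 5)/2)*(x^2+(1-Real.sqrt 5)/2*x+1)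
      - (x^2+(1+Real.sqrt 5)/2*x+1)*(2*x+(1-Real.sqrt 5)/2) = Real.sqrt 5 * (1-x^2) := by ring
  rw [hnum, mul_div_assoc', one_div, inv_mul_eq_div, mul_comm (Real.sqrt 5) (1-x^2),
    mul_div_assoc, div_self h5, mul_one]

private lemma gg5_contOn : ContinuousOn gg5 (Set.Icc (0:ℝ) 1) := by
  unfold gg5
  exact ContinuousOn.div (by fun_prop) (by fun_prop) (fun x _ => (q5_pos x).ne')

private lemma gg5_intble : IntervalIntegrable gg5 MeasureTheory.volume 0 1 := by
  have h : Set.uIcc (0:ℝ) 1 = Set.Icc 0 1 := Set.uIcc_of_le (by norm_num)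
  exact ContinuousOn.intervalIntegrable (h ▸ gg5_contOn)

private lemma gg5_pow_intble (k : ℕ) :
    IntervalIntegrable (fun x => x^k * gg5 x) MeasureTheory.volume 0 1 := by
  have h : Set.uIcc (0:ℝ) 1 = Set.Icc 0 1 := Set.uIcc_of_le (by norm_num)
  apply ContinuousOn.intervalIntegrable
  rw [h]
  exact (continuous_pow k).continuousOn.mul gg5_contOn

private lemma gg5_integral : ∫ x in (0:ℝ)..1, gg5 x
    = (2 / Real.sqrt 5) * Real.log ((1 + Real.sqrt 5) / 2) := by
  rw [integral_eq_sub_of_hasDerivAt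
    (fun x hx => gg5_deriv (by rwa [Set.uIcc_of_le (by norm_num)] at hx)) gg5_intble]
  have h5 : (0:ℝ) < Real.sqrt 5 := by positivity
  have hφ : (0:ℝ) < (1+Real.sqrt 5)/2 := by positivity
  have hB1 : (0:ℝ) < (1:ℝ)^2 + (1-Real.sqrt 5)/2*1 + 1 := by nlinarith [s5lt']
  have e1 : (1:ℝ)^2 + (1+Real.sqrt 5)/2*1 + 1
      = ((1+Real.sqrt 5)/2)^2 * ((1:ℝ)^2 + (1-Real.sqrt 5)/2*1+1) := by nlinarith [s5sq']
  unfold FF5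
  rw [e1, Real.log_mul (by positivity) hB1.ne', Real.log_pow]
  norm_num [Real.log_one]
  ring

private lemma key_poly5 (χ : ℕ → ℝ)
    (hχ : ∀ n : ℕ, χ n =
      if n % 5 = 0 then 0 else if n % 5 = 1 ∨ n % 5 = 4 then 1 else -1)
    (M : ℕ) (x : ℝ) :
    (x^4+x^3+x^2+x+1) * ∑ n ∈ Finset.range (5*M), χ (n+1) * x^n
      = (1 - x^(5*M)) * (1-x^2) := by
  induction M with
  | zero => simp
  | succ M ih =>
    have hc : ∀ j : ℕ, (5*M + j) % 5 = j % 5 := fun j => Nat.mul_add_mod 5 M j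
    have c1 : χ (5*M + 0 + 1) = 1 := by rw [show 5*M+0+1 = 5*M+1 by ring, hχ, hc]; norm_num
    have c2 : χ (5*M + 1 + 1) = -1 := by rw [show 5*M+1+1 = 5*M+2 by ring, hχ, hc]; norm_num
    have c3 : χ (5*M + 2 + 1) = -1 := by rw [show 5*M+2+1 = 5*M+3 by ring, hχ, hc]; norm_num
    have c4 : χ (5*M + 3 + 1) = 1 := by rw [show 5*M+3+1 = 5*M+4 by ring, hχ, hc]; norm_num
    have c5 : χ (5*M + 4 + 1) = 0 := by rw [show 5*M+4+1 = 5*M+5 by ring, hχ, hc]; norm_num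
    rw [show 5*(M+1) = 5*M+1+1+1+1+1 by ring, Finset.sum_range_succ, Finset.sum_range_succ,
      Finset.sum_range_succ, Finset.sum_range_succ, Finset.sum_range_succ]
    rw [show 5*M+1+1+1+1 = 5*M+4 by ring, show 5*M+1+1+1 = 5*M+3 by ring,
      show 5*M+1+1 = 5*M+2 by ring]
    rw [c1, c2, c3, c4, c5]
    have p0 : x^(5*M+1+1+1+1+1) = x^(5*M)*x^5 := by
      rw [show 5*M+1+1+1+1+1 = 5*M+5 by ring, pow_add]
    have p1 : x^(5*M+1) = x^(5*M)*x := by rw [pow_succ]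
    have p2 : x^(5*M+2) = x^(5*M)*x^2 := by rw [pow_add]
    have p3 : x^(5*M+3) = x^(5*M)*x^3 := by rw [pow_add]
    have p4 : x^(5*M+4) = x^(5*M)*x^4 := by rw [pow_add]
    rw [show 5*M+0 = 5*M by ring] at *
    rw [p0, p1, p2, p3, p4]
    linear_combination ih

/-- `∑_{n=1}^{∞} χ₅(n)/n = (2/√5)·log((1+√5)/2)` for the quadratic character mod 5. -/
theorem stmt5 (χ : ℕ → ℝ)
    (hχ : ∀ n : ℕ, χ n =
      if n % 5 = 0 then 0 else if n % 5 = 1 ∨ n % 5 = 4 then 1 else -1) :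
    Filter.Tendsto (fun N : ℕ => ∑ n ∈ Finset.range N, χ n / n) Filter.atTop
      (nhds ((2 / Real.sqrt 5) * Real.log ((1 + Real.sqrt 5) / 2))) := by
  set L := (2 / Real.sqrt 5) * Real.log ((1 + Real.sqrt 5) / 2) with hL
  set S : ℕ → ℝ := fun N => ∑ n ∈ Finset.range N, χ n / n with hS
  -- bound on |χ|
  have hχle : ∀ n, |χ n| ≤ 1 := by
    intro n; rw [hχ n]; split_ifs <;> norm_num
  -- Step 1: closed form of the block partial sums
  have hT : ∀ M : ℕ, S (5*M+1) = L - ∫ x in (0:ℝ)..1, x^(5*M) * gg5 x := by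
    intro M
    have h1 : S (5*M+1) = ∑ n ∈ Finset.range (5*M), χ (n+1) / ((n:ℝ)+1) := by
      simp only [hS]
      rw [Finset.sum_range_succ']
      have : χ 0 = 0 := by rw [hχ]; norm_num
      simp [this]
    have h2 : ∀ n : ℕ, χ (n+1) / ((n:ℝ)+1) = ∫ x in (0:ℝ)..1, χ (n+1) * x^n := by
      intro n
      rw [intervalIntegral.integral_const_mul, integral_pow]
      norm_num
      ring
    have h3 : S (5*M+1) = ∫ x in (0:ℝ)..1, ∑ n ∈ Finset.range (5*M), χ (n+1) * x^n := by
      rw [h1]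
      rw [intervalIntegral.integral_finset_sum (μ := MeasureTheory.volume) (a := (0:ℝ)) (b := 1)
        (f := fun n x => χ (n+1) * x^n)
        (fun i _ => Continuous.intervalIntegrable (by fun_prop) 0 1)]
      exact Finset.sum_congr rfl (fun n _ => h2 n)
    have h4 : ∀ x : ℝ, ∑ n ∈ Finset.range (5*M), χ (n+1) * x^n
        = gg5 x - x^(5*M) * gg5 x := by
      intro x
      have hq := q5_pos x
      have hkey := key_poly5 χ hχ M x
      unfold gg5
      have hq' : x^4+x^3+x^2+x+1 ≠ 0 := hq.ne'
      show _ = (1 - x^2)/(x^4+x^3+x^2+x+1) - x^(5*M) * ((1 - x^2)/(x^4+x^3+x^2+x+1))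
      rw [show (1 - x^2)/(x^4+x^3+x^2+x+1) - x^(5*M) * ((1 - x^2)/(x^4+x^3+x^2+x+1))
        = (1 - x^(5*M)) * (1 - x^2)/(x^4+x^3+x^2+x+1) by ring]
      exact eq_div_of_mul_eq hq' (by linear_combination hkey)
    rw [h3]
    simp_rw [h4]
    rw [intervalIntegral.integral_sub gg5_intble (gg5_pow_intble (5*M)), gg5_integral]
  -- Step 2: the error integral tends to 0
  have hqle : ∀ x ∈ Set.Icc (0:ℝ) 1, gg5 x ≤ 1 := by
    intro x hx
    obtain ⟨h0, h1⟩ := hx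
    rw [gg5, div_le_one (q5_pos x)]
    nlinarith
  have hgnn : ∀ x ∈ Set.Icc (0:ℝ) 1, 0 ≤ gg5 x := by
    intro x hx
    obtain ⟨h0, h1⟩ := hx
    exact div_nonneg (by nlinarith) (q5_pos x).le
  have herr : ∀ M : ℕ, |∫ x in (0:ℝ)..1, x^(5*M) * gg5 x| ≤ 1/(5*(M:ℝ)+1) := by
    intro M
    have hnn : 0 ≤ ∫ x in (0:ℝ)..1, x^(5*M) * gg5 x := by
      apply intervalIntegral.integral_nonneg (by norm_num)
      intro x hx
      exact mul_nonneg (pow_nonneg hx.1 _) (hgnn x hx)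
    have hub : (∫ x in (0:ℝ)..1, x^(5*M) * gg5 x) ≤ ∫ x in (0:ℝ)..1, x^(5*M) := by
      apply intervalIntegral.integral_mono_on (by norm_num) (gg5_pow_intble (5*M))
        ((continuous_pow (5*M)).intervalIntegrable 0 1)
      intro x hx
      calc x^(5*M) * gg5 x ≤ x^(5*M) * 1 :=
            mul_le_mul_of_nonneg_left (hqle x hx) (pow_nonneg hx.1 _)
        _ = x^(5*M) := mul_one _
    have hval : (∫ x in (0:ℝ)..1, x^(5*M)) = 1/(5*(M:ℝ)+1) := by
      rw [integral_pow]
      push_cast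
      norm_num
    rw [abs_of_nonneg hnn]
    rw [hval] at hub
    exact hub
  have hbound0 : Tendsto (fun M : ℕ => 1/(5*(M:ℝ)+1)) atTop (nhds 0) := by
    simp only [one_div]
    apply Tendsto.comp tendsto_inv_atTop_zero
    apply tendsto_atTop_mono (fun M : ℕ => by push_cast; linarith [Nat.cast_nonneg (α := ℝ) M] :
      ∀ M : ℕ, (M:ℝ) ≤ 5*(M:ℝ)+1)
    exact tendsto_natCast_atTop_atTop
  have herr0 : Tendsto (fun M : ℕ => ∫ x in (0:ℝ)..1, x^(5*M) * gg5 x) atTop (nhds 0) := by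
    apply squeeze_zero_norm (fun M => herr M) hbound0
  have hTlim : Tendsto (fun M : ℕ => S (5*M+1)) atTop (nhds L) := by
    simp_rw [hT]
    simpa using tendsto_const_nhds.sub herr0
  -- Step 3: from block sums to all partial sums
  have hdiff : ∀ N : ℕ, ‖S N - S (5*(N/5)+1)‖ ≤ 4/(5*((N/5 : ℕ):ℝ)+1) := by
    intro N
    set M := N/5 with hM
    have hMl : 5*M ≤ N := by omega
    have hMu : N < 5*M+5 := by omega
    have hpos : (0:ℝ) < 5*((M:ℕ):ℝ)+1 := by positivity
    by_cases hcase : 5*M+1 ≤ N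
    · have hsplit : S N - S (5*M+1) = ∑ n ∈ Finset.Ico (5*M+1) N, χ n / n := by
        simp only [hS]
        rw [Finset.range_eq_Ico,
          ← Finset.sum_Ico_consecutive _ (Nat.zero_le (5*M+1)) hcase, Finset.range_eq_Ico]
        ring
      rw [hsplit]
      calc ‖∑ n ∈ Finset.Ico (5*M+1) N, χ n / n‖
          ≤ ∑ n ∈ Finset.Ico (5*M+1) N, ‖χ n / (n:ℝ)‖ := norm_sum_le _ _
        _ ≤ ∑ _n ∈ Finset.Ico (5*M+1) N, 1/(5*((M:ℕ):ℝ)+1) := by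
            apply Finset.sum_le_sum
            intro n hn
            obtain ⟨hn1, hn2⟩ := Finset.mem_Ico.1 hn
            have hnR : 5*((M:ℕ):ℝ)+1 ≤ (n:ℝ) := by
              have : (5*M+1 : ℕ) ≤ n := hn1
              calc 5*((M:ℕ):ℝ)+1 = ((5*M+1 : ℕ):ℝ) := by push_cast; ring
                _ ≤ (n:ℝ) := Nat.cast_le.2 this
            have hn0 : (0:ℝ) < n := lt_of_lt_of_le hpos hnR
            rw [norm_div, Real.norm_natCast]
            rw [div_le_div_iff₀ hn0 hpos]
            calc ‖χ n‖ * (5*((M:ℕ):ℝ)+1) ≤ 1 * (n:ℝ) := by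
                  apply mul_le_mul (hχle n) hnR hpos.le (by norm_num)
              _ = 1 * (n:ℝ) := rfl
        _ = (Finset.Ico (5*M+1) N).card * (1/(5*((M:ℕ):ℝ)+1)) := by
            rw [Finset.sum_const, nsmul_eq_mul]
        _ ≤ 4 * (1/(5*((M:ℕ):ℝ)+1)) := by
            apply mul_le_mul_of_nonneg_right _ (by positivity)
            rw [Nat.card_Ico]
            have : N - (5*M+1) ≤ 4 := by omega
            calc ((N - (5*M+1) : ℕ):ℝ) ≤ ((4:ℕ):ℝ) := Nat.cast_le.2 this
              _ = 4 := by norm_num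
        _ = 4/(5*((M:ℕ):ℝ)+1) := by ring
    · have hNM : N = 5*M := by omega
      have hz : χ (5*M) = 0 := by rw [hχ]; simp [Nat.mul_mod_right]
      have : S (5*M+1) = S N := by
        rw [hNM]
        simp only [hS]
        rw [Finset.sum_range_succ, hz]
        simp
      rw [this]
      simp
      positivity
  have hdiv : Tendsto (fun N : ℕ => N/5) atTop atTop := by
    apply tendsto_atTop.2
    intro b
    filter_upwards [eventually_ge_atTop (5*b)] with N hN
    omega
  have hcomp : Tendsto (fun N : ℕ => S (5*(N/5)+1)) atTop (nhds L) := hTlim.comp hdiv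
  have hb2 : Tendsto (fun N : ℕ => 4/(5*((N/5 : ℕ):ℝ)+1)) atTop (nhds 0) := by
    have : Tendsto (fun M : ℕ => 4/(5*((M:ℕ):ℝ)+1)) atTop (nhds 0) := by
      have := hbound0.const_mul (4:ℝ)
      simpa [div_eq_mul_inv, mul_comm] using this
    exact this.comp hdiv
  have hzero : Tendsto (fun N : ℕ => S N - S (5*(N/5)+1)) atTop (nhds 0) :=
    squeeze_zero_norm hdiff hb2
  have := hcomp.add hzero
  simp only [add_zero] at this
  convert this using 2 with N
  ring
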